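/- Suppose t₀, t₁ are real numbers and c > 0 is such that |sin(k(t₀ - t₁))| ≥ c/k for all positive integers k. If 0 < q < 2c/|t₀ - t₁|, then there exists c' > 0 such that |sin(√(k² + q)·(t₀ - t₁))| ≥ c'/k for all positive integers k. In fact one can take c' = c - q|t₀ - t₁|/2. -/

import Mathlib

open Real

lemma sin_lip (a b : ℝ) : |Real.sin a - Real.sin b| ≤ |a - b| := by
  rw [Real.sin_sub_sin]
  calc |2 * Real.sin ((a - b) / 2) * Real.cos ((a + b) / 2)|
      = 2 * |Real.sin ((a - b) / 2)| * |Real.cos ((a + b) / 2)| := by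
        rw [abs_mul, abs_mul, abs_two]
    _ ≤ 2 * |(a - b) / 2| * 1 :=
        mul_le_mul (by have := Real.abs_sin_le_abs (x := (a-b)/2); linarith)
          (Real.abs_cos_le_one _) (abs_nonneg _) (by positivity)
    _ = |a - b| := by rw [abs_div, abs_two]; ring

theorem stmt_3 (t₀ t₁ : ℝ) (hne : t₀ ≠ t₁) (c : ℝ) (hc : 0 < c)
    (hsin : ∀ k : ℕ, 1 ≤ k → |Real.sin (k * (t₀ - t₁))| ≥ c / k)
    (q : ℝ) (hq : 0 < q) (hq' : q < 2 * c / |t₀ - t₁|) :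
    0 < c - q * |t₀ - t₁| / 2 ∧
    ∀ k : ℕ, 1 ≤ k →
      |Real.sin (Real.sqrt ((k : ℝ) ^ 2 + q) * (t₀ - t₁))| ≥ (c - q * |t₀ - t₁| / 2) / k := by
  have hΔ : 0 < |t₀ - t₁| := abs_pos.2 (sub_ne_zero.2 hne)
  have hqΔ : q * |t₀ - t₁| < 2 * c := by
    rw [lt_div_iff₀ hΔ] at hq'; linarith
  have hpos : 0 < c - q * |t₀ - t₁| / 2 := by linarith
  refine ⟨hpos, fun k hk => ?_⟩
  have hk0 : (0 : ℝ) < k := by exact_mod_cast hk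
  set s := Real.sqrt ((k : ℝ) ^ 2 + q) with hs
  have hsk : (k : ℝ) ≤ s := by
    rw [hs]
    nlinarith [Real.sq_sqrt (by positivity : (0:ℝ) ≤ (k : ℝ) ^ 2 + q),
      Real.sqrt_nonneg ((k : ℝ) ^ 2 + q)]
  have hsub : s - k ≤ q / (2 * k) := by
    have h1 : s ≤ k + q / (2 * k) := by
      rw [hs]
      have : (k : ℝ) ^ 2 + q ≤ (k + q / (2 * k)) ^ 2 := by
        have e : (k : ℝ) * (q / (2 * k)) = q / 2 := by field_simp
        nlinarith [sq_nonneg (q / (2 * (k:ℝ)))]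
      calc Real.sqrt ((k : ℝ) ^ 2 + q) ≤ Real.sqrt ((k + q / (2 * k)) ^ 2) :=
            Real.sqrt_le_sqrt this
        _ = k + q / (2 * k) := Real.sqrt_sq (by positivity)
    linarith
  have key : |Real.sin (s * (t₀ - t₁))| ≥ |Real.sin (k * (t₀ - t₁))| - |s * (t₀ - t₁) - k * (t₀ - t₁)| := by
    have := sin_lip (s * (t₀ - t₁)) ((k : ℝ) * (t₀ - t₁))
    have h2 := abs_sub_abs_le_abs_sub (Real.sin ((k : ℝ) * (t₀ - t₁))) (Real.sin (s * (t₀ - t₁)))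
    rw [abs_sub_comm] at this
    linarith [abs_sub_comm (s * (t₀ - t₁)) ((k : ℝ) * (t₀ - t₁)) ▸ this]
  have hdist : |s * (t₀ - t₁) - k * (t₀ - t₁)| ≤ q / (2 * k) * |t₀ - t₁| := by
    rw [← sub_mul, abs_mul]
    gcongr
    rw [abs_of_nonneg (by linarith)]
    exact hsub
  have h3 := hsin k hk
  have : (c - q * |t₀ - t₁| / 2) / k = c / k - q / (2 * k) * |t₀ - t₁| := by
    field_simp
  rw [this]
  linarith
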